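/- Let A : X → Y and B : Y → X be bounded linear operators between Banach spaces and let λ be a nonzero complex number. Then the range of AB − λ is dense in Y if and only if the range of BA − λ is dense in X. -/

import Mathlib

lemma stmt7_aux {X Y : Type*} [NormedAddCommGroup X] [NormedSpace ℂ X]
    [NormedAddCommGroup Y] [NormedSpace ℂ Y]
    (A : X →L[ℂ] Y) (B : Y →L[ℂ] X) (l : ℂ) (hl : l ≠ 0)
    (h : Dense (Set.range (B.comp A - l • (1 : X →L[ℂ] X)))) :
    Dense (Set.range (A.comp B - l • (1 : Y →L[ℂ] Y))) := by
  intro y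
  rw [Metric.mem_closure_iff]
  intro ε hε
  have hlpos : 0 < ‖l‖ := norm_pos_iff.mpr hl
  set δ := ε * ‖l‖ / (‖A‖ + 1) with hδdef
  have hδ : 0 < δ := by positivity
  obtain ⟨b, ⟨x, hx⟩, hdist⟩ := Metric.mem_closure_iff.mp (h (B y)) δ hδ
  subst hx
  refine ⟨(A.comp B - l • (1 : Y →L[ℂ] Y)) (l⁻¹ • (A x - y)), ⟨_, rfl⟩, ?_⟩
  have key : (A.comp B - l • (1 : Y →L[ℂ] Y)) (l⁻¹ • (A x - y)) - y
      = l⁻¹ • (A ((B.comp A - l • (1 : X →L[ℂ] X)) x - B y)) := by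
    simp only [ContinuousLinearMap.sub_apply, ContinuousLinearMap.smul_apply,
      ContinuousLinearMap.one_apply, ContinuousLinearMap.comp_apply, map_smul, map_sub,
      smul_sub, smul_smul, mul_inv_cancel₀ hl, one_smul]
    rw [inv_mul_cancel₀ hl, one_smul, one_smul]
    abel
  have hw : ‖(B.comp A - l • (1 : X →L[ℂ] X)) x - B y‖ < δ := by
    rw [← dist_eq_norm]
    rw [dist_comm]
    exact hdist
  rw [dist_comm, dist_eq_norm, key, norm_smul, norm_inv]
  calc ‖l‖⁻¹ * ‖A ((B.comp A - l • (1 : X →L[ℂ] X)) x - B y)‖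
      ≤ ‖l‖⁻¹ * (‖A‖ * ‖(B.comp A - l • (1 : X →L[ℂ] X)) x - B y‖) := by
        gcongr; exact A.le_opNorm _
    _ < ‖l‖⁻¹ * ((‖A‖ + 1) * δ) := by
        refine mul_lt_mul_of_pos_left ?_ (by positivity)
        nlinarith [norm_nonneg A, norm_nonneg ((B.comp A - l • (1 : X →L[ℂ] X)) x - B y)]
    _ = ε := by
        rw [hδdef]
        have habs : ‖l‖ ≠ 0 := by simpa using hl
        field_simp

theorem stmt7 {X Y : Type*} [NormedAddCommGroup X] [NormedSpace ℂ X] [CompleteSpace X]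
    [NormedAddCommGroup Y] [NormedSpace ℂ Y] [CompleteSpace Y]
    (A : X →L[ℂ] Y) (B : Y →L[ℂ] X) (l : ℂ) (hl : l ≠ 0) :
    Dense (Set.range (A.comp B - l • (1 : Y →L[ℂ] Y))) ↔
      Dense (Set.range (B.comp A - l • (1 : X →L[ℂ] X))) := by
  exact ⟨stmt7_aux B A l hl, stmt7_aux A B l hl⟩
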